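/- Let k be a field, G a finite group whose order is invertible in k, and R the formal power series ring k[[z_1, …, z_d]] with maximal ideal m. Suppose G acts on R on the right by k-algebra automorphisms g* (so (gh)* = h* ∘ g*). Let α : G → GL_d(k) be a group homomorphism and let u_1, …, u_d ∈ m be elements whose residue classes form a basis of m/m², and suppose that for every g ∈ G and every j, g*(u_j) ≡ Σ_{l=1}^d α(g)_{jl} · u_l modulo m². Then there exist elements v_1, …, v_d ∈ m with v_i ≡ u_i modulo m² for all i (in particular, the residue classes of the v_i again form a basis of m/m²) such that the action of G on the v_i is exactly linear: g*(v_i) = Σ_{j=1}^d α(g)_{ij} · v_j for all g ∈ G and all i. -/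

import Mathlib

open MvPowerSeries

/-- **Linearization of a finite group action in formal coordinates** (equation (4) of the
paper).  Let `k` be a field, `G` a finite group with `|G|` invertible in `k`, and
`R = k[[z_1, …, z_d]]` with maximal ideal `m = ker(constantCoeff)`.  Suppose `G` acts on
`R` on the right by `k`-algebra automorphisms (`(gh)* = h* ∘ g*`, `e* = id`).  Let
`u 1, …, u d ∈ m` have residue classes forming a basis of `m/m²` (expressed below by the
spanning condition `hspan` and the independence condition `hindep`), and suppose
`g*(u j) ≡ ∑_l α(g)ⱼₗ • u l mod m²` for all `g, j`.  Then there exist `v 1, …, v d ∈ m`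
with `v i ≡ u i mod m²` (so their residue classes again form a basis of `m/m²`) on which
the action of `G` is exactly linear: `g*(v i) = ∑_j α(g)ᵢⱼ • v j`. -/
theorem finite_group_action_linearizable
    {k : Type*} [Field k] {G : Type*} [Group G] [Fintype G]
    (hcard : (Fintype.card G : k) ≠ 0)
    {d : ℕ}
    (act : G → (MvPowerSeries (Fin d) k ≃ₐ[k] MvPowerSeries (Fin d) k))
    (h_one : act 1 = AlgEquiv.refl)
    (h_mul : ∀ g h : G, act (g * h) = (act g).trans (act h))
    (α : G →* Matrix.GeneralLinearGroup (Fin d) k)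
    (m : Ideal (MvPowerSeries (Fin d) k))
    (hm : m = RingHom.ker (MvPowerSeries.constantCoeff : MvPowerSeries (Fin d) k →+* k))
    (u : Fin d → MvPowerSeries (Fin d) k)
    (hu : ∀ j : Fin d, u j ∈ m)
    -- the residue classes of the `u i` span `m/m²` …
    (hspan : ∀ x ∈ m, ∃ c : Fin d → k, x - ∑ i : Fin d, c i • u i ∈ m ^ 2)
    -- … and are linearly independent in `m/m²`
    (hindep : ∀ c : Fin d → k, (∑ i : Fin d, c i • u i ∈ m ^ 2) → c = 0)
    (hlin : ∀ (g : G) (j : Fin d),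
      act g (u j) - ∑ l : Fin d, ((α g : Matrix (Fin d) (Fin d) k) j l) • u l ∈ m ^ 2) :
    ∃ v : Fin d → MvPowerSeries (Fin d) k,
      (∀ i : Fin d, v i ∈ m) ∧
      (∀ i : Fin d, v i - u i ∈ m ^ 2) ∧
      (∀ (g : G) (i : Fin d),
        act g (v i) = ∑ j : Fin d, ((α g : Matrix (Fin d) (Fin d) k) i j) • v j) := by
  classical
  set c : k := (Fintype.card G : k)⁻¹ with hc
  set N : G → Matrix (Fin d) (Fin d) k :=
    fun g => ((α g⁻¹ : Matrix.GeneralLinearGroup (Fin d) k) : Matrix (Fin d) (Fin d) k) with hN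
  -- N g * α g = 1
  have hNmul : ∀ g : G, N g * (α g : Matrix (Fin d) (Fin d) k) = 1 := by
    intro g
    have : (α g⁻¹) * (α g) = 1 := by rw [← map_mul, inv_mul_cancel, map_one]
    calc N g * (α g : Matrix (Fin d) (Fin d) k) = ((α g⁻¹ * α g : Matrix.GeneralLinearGroup (Fin d) k) : Matrix (Fin d) (Fin d) k) := rfl
      _ = 1 := by rw [this]; rfl
  set v : Fin d → MvPowerSeries (Fin d) k :=
    fun i => c • ∑ g : G, ∑ j : Fin d, N g i j • act g (u j) with hv
  have hm2le : m ^ 2 ≤ m := Ideal.pow_le_self (by norm_num)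
  -- act g (u j) ∈ m
  have hmem : ∀ (g : G) (j : Fin d), act g (u j) ∈ m := by
    intro g j
    have h1 := hlin g j
    have h2 : (∑ l : Fin d, ((α g : Matrix (Fin d) (Fin d) k) j l) • u l) ∈ m :=
      Submodule.sum_mem _ fun l _ => Submodule.smul_of_tower_mem _ _ (hu l)
    have : act g (u j) =
        (act g (u j) - ∑ l : Fin d, ((α g : Matrix (Fin d) (Fin d) k) j l) • u l)
        + ∑ l : Fin d, ((α g : Matrix (Fin d) (Fin d) k) j l) • u l := by ring
    rw [this]
    exact Submodule.add_mem _ (hm2le h1) h2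
  have hvm : ∀ i : Fin d, v i ∈ m := by
    intro i
    exact Submodule.smul_of_tower_mem _ _ (Submodule.sum_mem _ fun g _ =>
      Submodule.sum_mem _ fun j _ => Submodule.smul_of_tower_mem _ _ (hmem g j))
  -- key pointwise congruence
  have key1 : ∀ (g : G) (i : Fin d),
      (∑ j : Fin d, N g i j • act g (u j)) - u i ∈ m ^ 2 := by
    intro g i
    have h1 : (∑ j : Fin d, N g i j •
        (act g (u j) - ∑ l : Fin d, ((α g : Matrix (Fin d) (Fin d) k) j l) • u l)) ∈ m ^ 2 :=
      Submodule.sum_mem _ fun j _ => Submodule.smul_of_tower_mem _ _ (hlin g j)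
    have h2 : ∑ j : Fin d, N g i j • (∑ l : Fin d, ((α g : Matrix (Fin d) (Fin d) k) j l) • u l)
        = u i := by
      calc ∑ j : Fin d, N g i j • (∑ l : Fin d, ((α g : Matrix (Fin d) (Fin d) k) j l) • u l)
          = ∑ j : Fin d, ∑ l : Fin d,
              (N g i j * (α g : Matrix (Fin d) (Fin d) k) j l) • u l := by
            simp [Finset.smul_sum, smul_smul]
        _ = ∑ l : Fin d, (∑ j : Fin d,
              N g i j * (α g : Matrix (Fin d) (Fin d) k) j l) • u l := by
            rw [Finset.sum_comm]
            simp [Finset.sum_smul]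
        _ = ∑ l : Fin d, ((N g * (α g : Matrix (Fin d) (Fin d) k)) i l) • u l := by
            simp [Matrix.mul_apply]
        _ = u i := by
            rw [hNmul g]
            simp [Matrix.one_apply]
    have h3 : (∑ j : Fin d, N g i j • act g (u j)) - u i
        = ∑ j : Fin d, N g i j •
            (act g (u j) - ∑ l : Fin d, ((α g : Matrix (Fin d) (Fin d) k) j l) • u l) := by
      rw [Finset.sum_congr rfl (fun j _ => smul_sub (N g i j) _ _), Finset.sum_sub_distrib, h2]
    rw [h3]; exact h1
  have hvu : ∀ i : Fin d, v i - u i ∈ m ^ 2 := by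
    intro i
    have hcs : c • ((Fintype.card G : ℕ) • u i) = u i := by
      rw [← Nat.cast_smul_eq_nsmul k, smul_smul, inv_mul_cancel₀ hcard, one_smul]
    have h4 : v i - u i = c • ∑ g : G, ((∑ j : Fin d, N g i j • act g (u j)) - u i) := by
      rw [Finset.sum_sub_distrib, Finset.sum_const, Finset.card_univ, smul_sub, hcs, hv]
    rw [h4]
    exact Submodule.smul_of_tower_mem _ _ (Submodule.sum_mem _ fun g _ => key1 g i)
  refine ⟨v, hvm, hvu, ?_⟩
  intro h i
  have hact : ∀ (g : G) (x : MvPowerSeries (Fin d) k), act h (act g x) = act (g * h) x := by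
    intro g x; rw [h_mul g h]; rfl
  have step1 : act h (v i) = c • ∑ g : G, ∑ j : Fin d, N g i j • act (g * h) (u j) := by
    rw [hv]
    simp only [map_smul, map_sum]
    congr 1
    refine Finset.sum_congr rfl fun g _ => Finset.sum_congr rfl fun j _ => ?_
    rw [hact g (u j)]
  -- reindex g ↦ g * h
  have step2 : ∑ g : G, ∑ j : Fin d, N g i j • act (g * h) (u j)
      = ∑ g : G, ∑ j : Fin d, N (g * h⁻¹) i j • act g (u j) := by
    refine Fintype.sum_equiv (Equiv.mulRight h) _ _ fun g => ?_
    simp [Equiv.coe_mulRight]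
  -- N (g * h⁻¹) = α h * N g
  have step3 : ∀ g : G, N (g * h⁻¹) = (α h : Matrix (Fin d) (Fin d) k) * N g := by
    intro g
    have : α ((g * h⁻¹)⁻¹) = α h * α g⁻¹ := by
      rw [mul_inv_rev, inv_inv, map_mul]
    calc N (g * h⁻¹) = ((α ((g * h⁻¹)⁻¹) : Matrix.GeneralLinearGroup (Fin d) k) :
            Matrix (Fin d) (Fin d) k) := rfl
      _ = ((α h * α g⁻¹ : Matrix.GeneralLinearGroup (Fin d) k) : Matrix (Fin d) (Fin d) k) := by
          rw [this]
      _ = (α h : Matrix (Fin d) (Fin d) k) * N g := rfl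
  rw [step1, step2]
  have step4 : ∑ g : G, ∑ j : Fin d, N (g * h⁻¹) i j • act g (u j)
      = ∑ l : Fin d, (α h : Matrix (Fin d) (Fin d) k) i l •
          ∑ g : G, ∑ j : Fin d, N g l j • act g (u j) := by
    calc ∑ g : G, ∑ j : Fin d, N (g * h⁻¹) i j • act g (u j)
        = ∑ g : G, ∑ j : Fin d, ∑ l : Fin d,
            (α h : Matrix (Fin d) (Fin d) k) i l • (N g l j • act g (u j)) := by
          refine Finset.sum_congr rfl fun g _ => Finset.sum_congr rfl fun j _ => ?_
          rw [step3 g, Matrix.mul_apply, Finset.sum_smul]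
          exact Finset.sum_congr rfl fun l _ => (smul_smul _ _ _).symm
      _ = ∑ g : G, ∑ l : Fin d, ∑ j : Fin d,
            (α h : Matrix (Fin d) (Fin d) k) i l • (N g l j • act g (u j)) :=
          Finset.sum_congr rfl fun g _ => Finset.sum_comm
      _ = ∑ l : Fin d, ∑ g : G, ∑ j : Fin d,
            (α h : Matrix (Fin d) (Fin d) k) i l • (N g l j • act g (u j)) :=
          Finset.sum_comm
      _ = ∑ l : Fin d, (α h : Matrix (Fin d) (Fin d) k) i l •
            ∑ g : G, ∑ j : Fin d, N g l j • act g (u j) := by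
          simp [Finset.smul_sum]
  rw [step4, Finset.smul_sum]
  exact Finset.sum_congr rfl fun l _ => by rw [hv]; simp only []; rw [smul_comm]
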